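/- Define paracomplex-valued functions on ℝ² by ψ₁(u,v) = (1/2)(1 − τ tanh u), ψ₂(u,v) = 0, ψ₃(u,v) = (1/2)(tanh u − τ). Then: (1) they satisfy the de Sitter Weierstrass system ∂ψ₁/∂z̄ − conj(ψ₁)ψ₃ = 0 and ∂ψ₂/∂z̄ − conj(ψ₂)ψ₃ = 0 on all of ℝ²; (2) ψ₁² + ψ₂² − ψ₃² = 0; (3) ψ₁conj(ψ₁) + ψ₂conj(ψ₂) − ψ₃conj(ψ₃) = (1/2)sech²u ≠ 0 (identifying a real paracomplex number (x,0) with x). -/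

import Mathlib

/-- Paracomplex multiplication on 𝕃 = ℝ × ℝ. -/
def Lmul (z w : ℝ × ℝ) : ℝ × ℝ := (z.1 * w.1 + z.2 * w.2, z.1 * w.2 + z.2 * w.1)

/-- Paracomplex conjugation: a + τb ↦ a − τb. -/
def Lconj (z : ℝ × ℝ) : ℝ × ℝ := (z.1, -z.2)

/-- The paracomplex operator ∂/∂z̄: for ψ = (a, b), ∂ψ/∂z̄ = (1/2)(a_u − b_v, b_u − a_v). -/
noncomputable def dzbarL (ψ : ℝ × ℝ → ℝ × ℝ) (p : ℝ × ℝ) : ℝ × ℝ :=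
  ((1 / 2) * ((fderiv ℝ ψ p (1, 0)).1 - (fderiv ℝ ψ p (0, 1)).2),
   (1 / 2) * ((fderiv ℝ ψ p (1, 0)).2 - (fderiv ℝ ψ p (0, 1)).1))

lemma hasDerivAt_tanh (x : ℝ) :
    HasDerivAt Real.tanh (1 / Real.cosh x ^ 2) x := by
  have h := (Real.hasDerivAt_sinh x).div (Real.hasDerivAt_cosh x) (Real.cosh_pos x).ne'
  have heq : (Real.cosh x * Real.cosh x - Real.sinh x * Real.sinh x) / Real.cosh x ^ 2
      = 1 / Real.cosh x ^ 2 := by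
    rw [← sq, ← sq, Real.cosh_sq_sub_sinh_sq]
  rw [heq] at h
  have ht : Real.tanh = fun x => Real.sinh x / Real.cosh x := by
    funext y; exact Real.tanh_eq_sinh_div_cosh y
  rw [ht]
  exact h

lemma hasFDerivAt_tanh_fst (p : ℝ × ℝ) :
    HasFDerivAt (fun q : ℝ × ℝ => Real.tanh q.1)
      ((1 / Real.cosh p.1 ^ 2) • ContinuousLinearMap.fst ℝ ℝ ℝ) p :=
  (hasDerivAt_tanh p.1).comp_hasFDerivAt p (hasFDerivAt_fst)

/-- The Weierstrass data ψ₁ = (1/2)(1 − τ tanh u), ψ₂ = 0, ψ₃ = (1/2)(tanh u − τ)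
satisfies the de Sitter system ∂ψ₁/∂z̄ − conj(ψ₁)ψ₃ = 0, ∂ψ₂/∂z̄ − conj(ψ₂)ψ₃ = 0,
the condition ψ₁² + ψ₂² − ψ₃² = 0, and
ψ₁conj(ψ₁) + ψ₂conj(ψ₂) − ψ₃conj(ψ₃) = (1/2)sech²u ≠ 0. -/
theorem deSitter_vertical_plane_data
    (ψ₁ ψ₂ ψ₃ : ℝ × ℝ → ℝ × ℝ)
    (hψ₁ : ∀ p : ℝ × ℝ, ψ₁ p = (1 / 2, -(Real.tanh p.1) / 2))
    (hψ₂ : ∀ p : ℝ × ℝ, ψ₂ p = 0)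
    (hψ₃ : ∀ p : ℝ × ℝ, ψ₃ p = (Real.tanh p.1 / 2, -(1 / 2))) :
    (∀ p : ℝ × ℝ, dzbarL ψ₁ p - Lmul (Lconj (ψ₁ p)) (ψ₃ p) = 0 ∧
      dzbarL ψ₂ p - Lmul (Lconj (ψ₂ p)) (ψ₃ p) = 0) ∧
    (∀ p : ℝ × ℝ,
      Lmul (ψ₁ p) (ψ₁ p) + Lmul (ψ₂ p) (ψ₂ p) - Lmul (ψ₃ p) (ψ₃ p) = 0) ∧
    (∀ p : ℝ × ℝ,
      Lmul (ψ₁ p) (Lconj (ψ₁ p)) + Lmul (ψ₂ p) (Lconj (ψ₂ p)) -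
        Lmul (ψ₃ p) (Lconj (ψ₃ p)) = (1 / 2 * (1 / Real.cosh p.1 ^ 2), 0) ∧
      1 / 2 * (1 / Real.cosh p.1 ^ 2) ≠ 0) := by
  have hψ₁' : ψ₁ = fun p : ℝ × ℝ => ((1 : ℝ) / 2, -(Real.tanh p.1) / 2) := funext hψ₁
  have hψ₂' : ψ₂ = fun _ : ℝ × ℝ => (0 : ℝ × ℝ) := funext hψ₂
  have hch : ∀ x : ℝ, Real.cosh x ≠ 0 := fun x => (Real.cosh_pos x).ne'
  have htid : ∀ x : ℝ, Real.tanh x ^ 2 = 1 - 1 / Real.cosh x ^ 2 := by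
    intro x
    rw [Real.tanh_eq_sinh_div_cosh, div_pow]
    field_simp
    have := Real.cosh_sq_sub_sinh_sq x
    nlinarith [this]
  -- fderiv of ψ₁
  have hF1 : ∀ p : ℝ × ℝ, HasFDerivAt ψ₁
      (((0 : ℝ × ℝ →L[ℝ] ℝ)).prod
        ((-(1 / Real.cosh p.1 ^ 2) / 2) • ContinuousLinearMap.fst ℝ ℝ ℝ)) p := by
    intro p
    rw [hψ₁']
    refine HasFDerivAt.prodMk (hasFDerivAt_const _ _) ?_
    have h := (hasFDerivAt_tanh_fst p).const_smul ((-1 : ℝ)/2)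
    convert h using 1
    · funext q; simp [smul_eq_mul]; ring
    · rw [smul_smul]
      congr 1
      ring
  refine ⟨fun p => ?_, fun p => ?_, fun p => ?_⟩
  · constructor
    · have hfd := (hF1 p).fderiv
      simp only [dzbarL, hfd, hψ₁ p, hψ₃ p, Lconj, Lmul]
      simp only [ContinuousLinearMap.prod_apply, ContinuousLinearMap.zero_apply,
        ContinuousLinearMap.smul_apply, ContinuousLinearMap.coe_fst', smul_eq_mul]
      rw [Prod.ext_iff]
      have h := htid p.1
      constructor <;>
        · simp only [Prod.fst_sub, Prod.snd_sub, Prod.fst_zero, Prod.snd_zero]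
          nlinarith [htid p.1]
    · have hfd2 : fderiv ℝ ψ₂ p = 0 := by
        rw [hψ₂']; simp
      simp [dzbarL, hfd2, hψ₂ p, Lconj, Lmul, Prod.ext_iff]
  · simp only [hψ₁ p, hψ₂ p, hψ₃ p, Lmul, Prod.ext_iff]
    constructor <;> · simp; ring
  · refine ⟨?_, ?_⟩
    · simp only [hψ₁ p, hψ₂ p, hψ₃ p, Lmul, Lconj, Prod.ext_iff]
      have h := htid p.1
      constructor <;> simp <;>
        first
          | linear_combination ((-1 : ℝ)/2) * h
          | ring
    · positivity
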